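/- arXiv:2310.00479 — 2 statements merged into one kernel-verified Lean document; each statement's English description precedes it below -/
import Mathlib

section
/- Let A be a Noetherian local ring and let T = Â be its completion. If A is reduced and all fiber rings T ⊗_A κ(P) for P ∈ Spec(A) are reduced (where κ(P) = A_P/PA_P), then T is reduced. -/
open IsLocalRing

section Aux

variable (A : Type) [CommRing A]

/-- Residue field at a minimal prime, bundled to carry the `IsPrime` instance. -/
noncomputable def MinResField (P : minimalPrimes A) : Type :=
  haveI : P.1.IsPrime := P.2.1.1
  ResidueField (Localization.AtPrime P.1)

noncomputable instance (P : minimalPrimes A) : CommRing (MinResField A P) :=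
  haveI : P.1.IsPrime := P.2.1.1
  inferInstanceAs (CommRing (ResidueField (Localization.AtPrime P.1)))

noncomputable instance (P : minimalPrimes A) : Algebra A (MinResField A P) :=
  haveI : P.1.IsPrime := P.2.1.1
  inferInstanceAs (Algebra A (ResidueField (Localization.AtPrime P.1)))

lemma MinResField.algebraMap_eq_zero_iff (P : minimalPrimes A) (a : A) :
    algebraMap A (MinResField A P) a = 0 ↔ a ∈ P.1 := by
  haveI : P.1.IsPrime := P.2.1.1
  show algebraMap A (ResidueField (Localization.AtPrime P.1)) a = 0 ↔ a ∈ P.1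
  rw [IsScalarTower.algebraMap_apply A (Localization.AtPrime P.1)]
  rw [show (algebraMap (Localization.AtPrime P.1)
      (ResidueField (Localization.AtPrime P.1))) = residue _ from rfl]
  rw [residue_eq_zero_iff]
  conv_rhs => rw [← Localization.AtPrime.comap_maximalIdeal (I := P.1)]
  exact Iff.rfl

/-- The diagonal map into residue fields of minimal primes. -/
noncomputable def minResMap : A →ₗ[A] ∀ P : minimalPrimes A, MinResField A P :=
  LinearMap.pi fun P => Algebra.linearMap A (MinResField A P)

lemma minResMap_injective [IsReduced A] : Function.Injective (minResMap A) := by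
  rw [injective_iff_map_eq_zero]
  intro a ha
  have hmem : ∀ P : minimalPrimes A, a ∈ P.1 := by
    intro P
    have := congrFun ha P
    simpa [minResMap, MinResField.algebraMap_eq_zero_iff] using this
  have : a ∈ sInf (minimalPrimes A) := by
    rw [Ideal.mem_sInf]
    intro I hI
    exact hmem ⟨I, hI⟩
  rw [show (minimalPrimes A) = (⊥ : Ideal A).minimalPrimes from rfl,
    Ideal.sInf_minimalPrimes] at this
  have h0 : (⊥ : Ideal A).radical = nilradical A := rfl
  rw [h0, nilradical_eq_zero] at this
  simpa using this

end Aux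

set_option synthInstance.maxHeartbeats 1000000 in
set_option maxHeartbeats 1000000 in
/-- If a Noetherian local ring `A` is reduced and all fiber rings
`Â ⊗_A κ(P)` of the completion map are reduced, then the completion `Â` is reduced. -/
theorem isReduced_adicCompletion_of_reduced_fibers (A : Type) [CommRing A]
    [IsNoetherianRing A] [IsLocalRing A] [IsReduced A]
    (h : ∀ (P : Ideal A) [P.IsPrime],
      IsReduced (TensorProduct A (AdicCompletion (maximalIdeal A) A)
        (ResidueField (Localization.AtPrime P)))) :
    IsReduced (AdicCompletion (maximalIdeal A) A) := by
  classical
  set T := AdicCompletion (maximalIdeal A) A with hT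
  constructor
  intro x hx
  -- Step 1: for each minimal prime P, `x ⊗ 1 = 0` in `T ⊗ κ(P)`.
  have key : ∀ P : minimalPrimes A,
      (x ⊗ₜ[A] (1 : MinResField A P) : TensorProduct A T (MinResField A P)) = 0 := by
    intro P
    haveI : P.1.IsPrime := P.2.1.1
    haveI : IsReduced (TensorProduct A T (MinResField A P)) := h P.1
    have hnil : IsNilpotent
        ((Algebra.TensorProduct.includeLeft : T →ₐ[A] TensorProduct A T (MinResField A P)) x) :=
      hx.map _
    simpa using hnil.eq_zero
  -- Step 2: finiteness of minimal primes
  haveI : Fintype (minimalPrimes A) := (minimalPrimes.finite_of_isNoetherianRing A).fintype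
  -- Step 3: `x ⊗ 1 = 0` in `T ⊗ A`
  have h1 : (x ⊗ₜ[A] (1 : A) : TensorProduct A T A) = 0 := by
    have hinj1 : Function.Injective
        (TensorProduct.piRight A A T (MinResField A)) :=
      (TensorProduct.piRight A A T (MinResField A)).injective
    have hinj2 : Function.Injective
        (LinearMap.lTensor T (minResMap A)) :=
      Module.Flat.lTensor_preserves_injective_linearMap _ (minResMap_injective A)
    have h0 : (TensorProduct.piRight A A T (MinResField A))
        ((LinearMap.lTensor T (minResMap A)) (x ⊗ₜ[A] (1 : A))) = 0 := by
      rw [LinearMap.lTensor_tmul, TensorProduct.piRight_apply,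
        TensorProduct.piRightHom_tmul]
      funext P
      have h1 : minResMap A 1 P = (1 : MinResField A P) := by
        simp [minResMap]
      rw [h1]
      exact key P
    have h2 : (LinearMap.lTensor T (minResMap A)) (x ⊗ₜ[A] (1 : A)) = 0 := by
      apply hinj1
      rw [h0, map_zero]
    apply hinj2
    rw [h2, LinearMap.map_zero]
  -- Step 4: conclude via `T ⊗ A ≃ T`
  have h3 := congrArg (TensorProduct.rid A T) h1
  rw [map_zero, TensorProduct.rid_tmul] at h3
  simpa using h3
end

section
/- Let A ⊆ T be a ring extension of Noetherian rings, S = A \ {0} with A a domain, and suppose that a prime Q of T satisfies Q ∩ A = (0) if and only if Q is a minimal prime of T. If T is reduced, then the localization S⁻¹T is a regular ring (i.e., all its localizations at primes are regular local rings, in fact fields). -/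
open IsLocalRing

/-- A ring is a regular local ring if it is Noetherian and local and its maximal
ideal has a generating set of cardinality equal to its Krull dimension. -/
def IsRegLocalRing (R : Type) [CommRing R] : Prop :=
  IsNoetherianRing R ∧ ∃ _ : IsLocalRing R, ∃ s : Finset R,
    Ideal.span (s : Set R) = maximalIdeal R ∧ (s.card : WithBot ℕ∞) = ringKrullDim R

/-- A commutative ring is regular if all its localizations at primes are regular
local rings. -/
def IsRegRing (R : Type) [CommRing R] : Prop :=
  ∀ P : PrimeSpectrum R, IsRegLocalRing (Localization.AtPrime P.asIdeal)

/-- Let `A ⊆ T` be Noetherian rings with `A` a domain and `S = A \ {0}`, such that a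
prime `Q` of `T` contracts to `(0)` iff `Q` is a minimal prime of `T`.  If `T` is
reduced, then `S⁻¹T` is a regular ring, and in fact all of its localizations at
primes are fields. -/
theorem isRegRing_localization_nonZeroDivisors (A T : Type) [CommRing A] [IsDomain A]
    [IsNoetherianRing A] [CommRing T] [IsNoetherianRing T] [IsReduced T]
    (f : A →+* T) (hf : Function.Injective f)
    (hmin : ∀ (Q : Ideal T) [Q.IsPrime],
      (∀ a : A, f a ∈ Q → a = 0) ↔ Q ∈ minimalPrimes T) :
    IsRegRing (Localization (Submonoid.map f (nonZeroDivisors A))) ∧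
      ∀ P : PrimeSpectrum (Localization (Submonoid.map f (nonZeroDivisors A))),
        IsField (Localization.AtPrime P.asIdeal) := by
  set M : Submonoid T := Submonoid.map f (nonZeroDivisors A) with hM
  set L := Localization M with hL
  -- every prime of T disjoint from M is minimal, and conversely any comap of a prime of L
  -- is a minimal prime of T
  have hcomap : ∀ (p : Ideal L), p.IsPrime →
      (Ideal.comap (algebraMap T L) p) ∈ minimalPrimes T := by
    intro p hp
    have h := (IsLocalization.isPrime_iff_isPrime_disjoint M L p).mp hp
    have hQprime : (Ideal.comap (algebraMap T L) p).IsPrime := h.1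
    refine (hmin _).mp ?_
    intro a ha
    by_contra ha0
    have hmem : f a ∈ M := ⟨a, mem_nonZeroDivisors_of_ne_zero ha0, rfl⟩
    exact Set.disjoint_left.mp h.2 hmem ha
  -- all primes of L contained in one another are equal
  have hle : ∀ (p P : Ideal L), p.IsPrime → P.IsPrime → p ≤ P → p = P := by
    intro p P hp hP hle
    have h1 := hcomap p hp
    have h2 := hcomap P hP
    have hcle : Ideal.comap (algebraMap T L) p ≤ Ideal.comap (algebraMap T L) P :=
      Ideal.comap_mono hle
    have heq : Ideal.comap (algebraMap T L) p = Ideal.comap (algebraMap T L) P := by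
      rcases h2 with ⟨h2a, h2b⟩
      exact le_antisymm hcle (h2b ⟨h1.1.1, bot_le⟩ hcle)
    have := congrArg (Ideal.map (algebraMap T L)) heq
    rwa [IsLocalization.map_comap M L, IsLocalization.map_comap M L] at this
  have hfield : ∀ P : PrimeSpectrum L, IsField (Localization.AtPrime P.asIdeal) := by
    intro P
    set F := Localization.AtPrime P.asIdeal with hF
    rw [IsLocalRing.isField_iff_maximalIdeal_eq]
    -- the maximal ideal is the unique prime of F
    have huniq : ∀ (q : Ideal F), q.IsPrime → q = maximalIdeal F := by
      intro q hq
      have h := (IsLocalization.isPrime_iff_isPrime_disjoint P.asIdeal.primeCompl F q).mp hq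
      have hsub : Ideal.comap (algebraMap L F) q ≤ P.asIdeal := by
        intro x hx
        by_contra hxP
        exact Set.disjoint_left.mp h.2 hxP hx
      have heq : Ideal.comap (algebraMap L F) q = P.asIdeal :=
        hle _ _ h.1 P.isPrime hsub
      have := congrArg (Ideal.map (algebraMap L F)) heq
      rw [IsLocalization.map_comap P.asIdeal.primeCompl F] at this
      rw [this, Localization.AtPrime.map_eq_maximalIdeal]
    -- F is reduced, so nilradical F = 0, and it equals the maximal ideal
    have hred : IsReduced F := inferInstance
    have hnil : nilradical F = 0 := nilradical_eq_zero F
    have : maximalIdeal F ≤ nilradical F := by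
      rw [nilradical_eq_sInf]
      exact le_sInf fun J hJ => (huniq J hJ).symm ▸ le_rfl
    exact le_antisymm (by simpa [hnil] using this) bot_le
  refine ⟨fun P => ?_, hfield⟩
  have hfd := hfield P
  refine ⟨?_, inferInstance, ∅, ?_, ?_⟩
  · have hNL : IsNoetherianRing L := IsLocalization.isNoetherianRing M L inferInstance
    exact IsLocalization.isNoetherianRing P.asIdeal.primeCompl _ hNL
  · simp [← IsLocalRing.isField_iff_maximalIdeal_eq.mp hfd]
    rfl
  · rw [ringKrullDim_eq_zero_of_isField hfd]
    simp
end
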